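/- Let (X, d, x₀) be a pointed extended pseudometric space and p ∈ [1, ∞]. The following are equivalent: (1) there exists a p-subadditive extended pseudometric ρ on D(X, x₀) with i*ρ = d; (2) d satisfies the p-strengthened triangle inequality d(x, y) ≤ ‖(d(x, x₀), d(x₀, y))‖_p for all x, y ∈ X; (3) i*W_p[d, x₀] = d. -/

import Mathlib

open scoped ENNReal BigOperators
noncomputable section

/-- An extended pseudometric. -/
structure IsEPMetric {X : Type*} (d : X → X → ℝ≥0∞) : Prop where
  refl : ∀ x, d x x = 0
  symm : ∀ x y, d x y = d y x
  triangle : ∀ x y z, d x z ≤ d x y + d y z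

/-- The ℓ^p norm of a finite tuple of extended nonnegative reals. -/
def lpNorm (p : ℝ≥0∞) {n : ℕ} (v : Fin n → ℝ≥0∞) : ℝ≥0∞ :=
  if p = ∞ then ⨆ i, v i else (∑ i, v i ^ p.toReal) ^ (1 / p.toReal)

variable {X : Type*}

/-- The congruence on the free commutative monoid (multisets) identifying
formal sums that differ by copies of the basepoint. -/
def diagCon (x₀ : X) : AddCon (Multiset X) where
  r s t := ∃ a b : ℕ, s + Multiset.replicate a x₀ = t + Multiset.replicate b x₀
  iseqv := by
    constructor
    · exact fun s => ⟨0, 0, rfl⟩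
    · rintro s t ⟨a, b, h⟩; exact ⟨b, a, h.symm⟩
    · rintro s t u ⟨a, b, h₁⟩ ⟨a', b', h₂⟩
      refine ⟨a + a', b' + b, ?_⟩
      have h3 : s + Multiset.replicate a x₀ + Multiset.replicate a' x₀
          = u + Multiset.replicate b' x₀ + Multiset.replicate b x₀ := by
        rw [h₁, add_right_comm, h₂, add_right_comm]
      simpa [Multiset.replicate_add, add_assoc] using h3
  add' := by
    rintro s t s' t' ⟨a, b, h₁⟩ ⟨a', b', h₂⟩
    refine ⟨a + a', b + b', ?_⟩
    have h3 : (s + Multiset.replicate a x₀) + (s' + Multiset.replicate a' x₀)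
        = (t + Multiset.replicate b x₀) + (t' + Multiset.replicate b' x₀) := by rw [h₁, h₂]
    calc s + s' + Multiset.replicate (a + a') x₀
        = (s + Multiset.replicate a x₀) + (s' + Multiset.replicate a' x₀) := by
          rw [Multiset.replicate_add]; exact add_add_add_comm s s' _ _
      _ = (t + Multiset.replicate b x₀) + (t' + Multiset.replicate b' x₀) := h3
      _ = t + t' + Multiset.replicate (b + b') x₀ := by
          rw [Multiset.replicate_add]; exact (add_add_add_comm t t' _ _).symm

/-- The monoid of persistence diagrams on a pointed set. -/
abbrev Diagram (X : Type*) (x₀ : X) := (diagCon x₀).Quotient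

/-- The canonical map `X → D(X,x₀)`. -/
def diagι (x₀ : X) (x : X) : Diagram X x₀ := (diagCon x₀).mk' {x}

/-- Pad a tuple to length `r` with copies of the basepoint. -/
def padTo (x₀ : X) {n : ℕ} (x : Fin n → X) (r : ℕ) : Fin r → X :=
  fun k => if h : (k : ℕ) < n then x ⟨k, h⟩ else x₀

/-- The minimal ℓ^p matching cost between two tuples of equal length. -/
def matchCost (d : X → X → ℝ≥0∞) (p : ℝ≥0∞) {r : ℕ} (x y : Fin r → X) : ℝ≥0∞ :=
  ⨅ σ : Equiv.Perm (Fin r), lpNorm p (fun k => d (x k) (y (σ k)))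

/-- A tuple enumerating a multiset. -/
def mFun (s : Multiset X) : Fin s.toList.length → X := fun k => s.toList.get k

/-- The p-Wasserstein cost between two multisets, padding both to the combined length. -/
def WpM (d : X → X → ℝ≥0∞) (x₀ : X) (p : ℝ≥0∞) (s t : Multiset X) : ℝ≥0∞ :=
  matchCost d p (padTo x₀ (mFun s) (Multiset.card s + Multiset.card t))
                (padTo x₀ (mFun t) (Multiset.card s + Multiset.card t))

/-- The p-Wasserstein distance on the monoid of persistence diagrams. -/
def Wp (d : X → X → ℝ≥0∞) (x₀ : X) (p : ℝ≥0∞) (α β : Diagram X x₀) : ℝ≥0∞ :=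
  ⨅ (s : Multiset X) (t : Multiset X) (_ : (diagCon x₀).mk' s = α)
    (_ : (diagCon x₀).mk' t = β), WpM d x₀ p s t

/-- The Lipschitz norm of a map between extended pseudometric spaces. -/
def eLipNorm {Y : Type*} (d : X → X → ℝ≥0∞) (ρ : Y → Y → ℝ≥0∞) (f : X → Y) : ℝ≥0∞ :=
  sInf {C : ℝ≥0∞ | ∀ x y, ρ (f x) (f y) ≤ C * d x y}



namespace LpAux
variable {p : ℝ≥0∞}

lemma toReal_pos (hp : 1 ≤ p) (hpt : p ≠ ∞) : 0 < p.toReal := by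
  have : (1:ℝ≥0∞).toReal ≤ p.toReal := ENNReal.toReal_mono hpt hp
  simpa using lt_of_lt_of_le one_pos this

lemma one_le_toReal (hp : 1 ≤ p) (hpt : p ≠ ∞) : 1 ≤ p.toReal := by
  have : (1:ℝ≥0∞).toReal ≤ p.toReal := ENNReal.toReal_mono hpt hp
  simpa using this

lemma rpow_rpow_inv (hp : 1 ≤ p) (hpt : p ≠ ∞) (a : ℝ≥0∞) :
    (a ^ p.toReal) ^ (1 / p.toReal) = a := by
  rw [← ENNReal.rpow_mul, mul_one_div, div_self (toReal_pos hp hpt).ne', ENNReal.rpow_one]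

lemma lp_coord (hp : 1 ≤ p) {n : ℕ} (v : Fin n → ℝ≥0∞) (i : Fin n) :
    v i ≤ lpNorm p v := by
  rw [lpNorm]
  split_ifs with h
  · exact le_iSup v i
  · calc v i = (v i ^ p.toReal) ^ (1/p.toReal) := (rpow_rpow_inv hp h _).symm
      _ ≤ _ := by
        apply ENNReal.rpow_le_rpow _ (by positivity)
        exact Finset.single_le_sum (f := fun j => v j ^ p.toReal)
          (fun j _ => zero_le) (Finset.mem_univ i)

lemma lp_mono {n : ℕ} {v w : Fin n → ℝ≥0∞} (h : ∀ i, v i ≤ w i) :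
    lpNorm p v ≤ lpNorm p w := by
  rw [lpNorm, lpNorm]
  split_ifs with hpt
  · exact iSup_mono h
  · refine ENNReal.rpow_le_rpow ?_ (by positivity)
    exact Finset.sum_le_sum fun i _ => ENNReal.rpow_le_rpow (h i) ENNReal.toReal_nonneg

lemma lp_zero (hp : 1 ≤ p) {n : ℕ} {v : Fin n → ℝ≥0∞} (h : ∀ i, v i = 0) :
    lpNorm p v = 0 := by
  rw [lpNorm]
  split_ifs with hpt
  · simp [h]
  · have h0 : 0 < p.toReal := toReal_pos hp hpt
    rw [Finset.sum_congr rfl fun i _ => by rw [h i, ENNReal.zero_rpow_of_pos h0]]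
    rw [Finset.sum_const, smul_zero, ENNReal.zero_rpow_of_pos (by positivity)]


lemma rpow_inv_rpow (hp : 1 ≤ p) (hpt : p ≠ ∞) (a : ℝ≥0∞) :
    (a ^ (1 / p.toReal)) ^ p.toReal = a := by
  rw [← ENNReal.rpow_mul, one_div, inv_mul_cancel₀ (toReal_pos hp hpt).ne', ENNReal.rpow_one]

lemma lp_perm {m n : ℕ} (e : Fin m ≃ Fin n) (v : Fin n → ℝ≥0∞) :
    lpNorm p (v ∘ e) = lpNorm p v := by
  rw [lpNorm, lpNorm]
  split_ifs with h
  · exact e.surjective.iSup_comp v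
  · congr 1
    exact Equiv.sum_comp e fun i => v i ^ p.toReal

lemma iSup_pair (a b : ℝ≥0∞) : (⨆ i : Fin 2, ![a, b] i) = a ⊔ b := by
  refine le_antisymm (iSup_le ?_) (sup_le ?_ ?_)
  · intro i; fin_cases i <;> simp
  · simpa using le_iSup ![a, b] 0
  · simpa using le_iSup ![a, b] 1

lemma lp_pair (hpt : p ≠ ∞) (a b : ℝ≥0∞) :
    lpNorm p ![a, b] = (a ^ p.toReal + b ^ p.toReal) ^ (1 / p.toReal) := by
  rw [lpNorm, if_neg hpt, Fin.sum_univ_two]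
  rfl

lemma lp_pair_top (a b : ℝ≥0∞) : lpNorm ∞ ![a, b] = a ⊔ b := by
  rw [lpNorm, if_pos rfl, iSup_pair]

lemma lp_pair_zero (hp : 1 ≤ p) (a : ℝ≥0∞) : lpNorm p ![a, 0] = a := by
  by_cases hpt : p = ∞
  · subst hpt; rw [lp_pair_top]; simp
  · rw [lp_pair hpt, ENNReal.zero_rpow_of_pos (toReal_pos hp hpt), add_zero,
      rpow_rpow_inv hp hpt]

lemma lp_two_coord (hp : 1 ≤ p) {n : ℕ} (v : Fin n → ℝ≥0∞) {i j : Fin n} (hij : i ≠ j) :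
    lpNorm p ![v i, v j] ≤ lpNorm p v := by
  by_cases hpt : p = ∞
  · subst hpt
    rw [lp_pair_top, lpNorm, if_pos rfl]
    exact sup_le (le_iSup _ i) (le_iSup _ j)
  · rw [lp_pair hpt, lpNorm, if_neg hpt]
    refine ENNReal.rpow_le_rpow ?_ (by positivity)
    calc v i ^ p.toReal + v j ^ p.toReal
        = ∑ k ∈ ({i, j} : Finset (Fin n)), v k ^ p.toReal := (Finset.sum_pair (f := fun k => v k ^ p.toReal) hij).symm
      _ ≤ _ := Finset.sum_le_sum_of_subset (Finset.subset_univ _)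

lemma lp_add (hp : 1 ≤ p) {n : ℕ} (v w : Fin n → ℝ≥0∞) :
    lpNorm p (fun i => v i + w i) ≤ lpNorm p v + lpNorm p w := by
  by_cases hpt : p = ∞
  · subst hpt
    simp only [lpNorm, if_pos rfl]
    exact iSup_le fun i => add_le_add (le_iSup _ i) (le_iSup _ i)
  · simp only [lpNorm, if_neg hpt]
    have : (1:ℝ≥0∞).toReal ≤ p.toReal := ENNReal.toReal_mono hpt hp
    exact ENNReal.Lp_add_le Finset.univ v w (by simpa using this)

lemma lp_extend_zero (hp : 1 ≤ p) {r R : ℕ} (hrR : r ≤ R) (w : Fin r → ℝ≥0∞)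
    (w' : Fin R → ℝ≥0∞) (h1 : ∀ (k : Fin R) (h : (k : ℕ) < r), w' k = w ⟨k, h⟩)
    (h2 : ∀ k : Fin R, ¬ (k : ℕ) < r → w' k = 0) :
    lpNorm p w' = lpNorm p w := by
  rw [lpNorm, lpNorm]
  split_ifs with hpt
  · refine le_antisymm (iSup_le fun k => ?_) (iSup_le fun i => ?_)
    · by_cases h : (k : ℕ) < r
      · rw [h1 k h]; exact le_iSup _ _
      · rw [h2 k h]; exact zero_le
    · have hi : (i : ℕ) < R := lt_of_lt_of_le i.2 hrR
      have := h1 ⟨i, hi⟩ (by simpa using i.2)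
      calc w i = w' ⟨i, hi⟩ := by rw [this]
        _ ≤ _ := le_iSup _ _
  · congr 1
    have h0 : 0 < p.toReal := toReal_pos hp hpt
    have e1 : ∑ k : Fin R, w' k ^ p.toReal
        = ∑ k ∈ Finset.range R, (if hk : k < R then w' ⟨k, hk⟩ ^ p.toReal else 0) := by
      rw [← Fin.sum_univ_eq_sum_range]
      exact Finset.sum_congr rfl fun k _ => by rw [dif_pos k.2]
    have e2 : ∑ k : Fin r, w k ^ p.toReal
        = ∑ k ∈ Finset.range r, (if hk : k < R then w' ⟨k, hk⟩ ^ p.toReal else 0) := by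
      rw [← Fin.sum_univ_eq_sum_range]
      refine Finset.sum_congr rfl fun k _ => ?_
      have hkR : (k : ℕ) < R := lt_of_lt_of_le k.2 hrR
      rw [dif_pos hkR, h1 ⟨k, hkR⟩ (by simpa using k.2)]
    rw [e1, e2]
    refine (Finset.sum_subset (Finset.range_subset_range.2 hrR) ?_).symm
    intro k hk hk'
    have hkR : k < R := Finset.mem_range.1 hk
    rw [dif_pos hkR, h2 ⟨k, hkR⟩ (by simpa using hk'), ENNReal.zero_rpow_of_pos h0]

lemma lp_concat (hp : 1 ≤ p) {a b : ℕ} (w : Fin (a + b) → ℝ≥0∞)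
    (w₁ : Fin a → ℝ≥0∞) (w₂ : Fin b → ℝ≥0∞)
    (h1 : ∀ i : Fin a, w (Fin.castAdd b i) = w₁ i)
    (h2 : ∀ j : Fin b, w (Fin.natAdd a j) = w₂ j) :
    lpNorm p w = lpNorm p ![lpNorm p w₁, lpNorm p w₂] := by
  by_cases hpt : p = ∞
  · subst hpt
    rw [lp_pair_top, lpNorm, if_pos rfl, lpNorm, if_pos rfl, lpNorm, if_pos rfl]
    rw [← (finSumFinEquiv (m := a) (n := b)).surjective.iSup_comp (g := w), iSup_sum]
    congr 1
    · exact iSup_congr fun i => by rw [finSumFinEquiv_apply_left, h1]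
    · exact iSup_congr fun j => by rw [finSumFinEquiv_apply_right, h2]
  · rw [lp_pair hpt]
    simp only [lpNorm, if_neg hpt]
    rw [rpow_inv_rpow hp hpt, rpow_inv_rpow hp hpt]
    congr 1
    rw [Fin.sum_univ_add (f := fun k => w k ^ p.toReal)]
    congr 1
    · exact Finset.sum_congr rfl fun i _ => by rw [h1]
    · exact Finset.sum_congr rfl fun j _ => by rw [h2]

lemma lp_pair_le_add (hp : 1 ≤ p) (a b : ℝ≥0∞) : lpNorm p ![a, b] ≤ a + b := by
  have h0 : lpNorm p ![(0:ℝ≥0∞), b] = b := by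
    calc lpNorm p ![(0:ℝ≥0∞), b] = lpNorm p (![b, 0] ∘ (Equiv.swap 0 1)) := by
          congr 1
          funext i
          fin_cases i <;> simp [Equiv.swap_apply_left, Equiv.swap_apply_right]
      _ = lpNorm p ![b, 0] := lp_perm _ _
      _ = b := lp_pair_zero hp b
  calc lpNorm p ![a, b] = lpNorm p (fun i => ![a, 0] i + ![(0:ℝ≥0∞), b] i) := by
        congr 1; funext i; fin_cases i <;> simp
    _ ≤ lpNorm p ![a, 0] + lpNorm p ![(0:ℝ≥0∞), b] := lp_add hp _ _
    _ = a + b := by rw [lp_pair_zero hp, h0]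

end LpAux

namespace PDAux
variable {X : Type*}

/-- The multiset of values of a tuple. -/
def msOf {r : ℕ} (u : Fin r → X) : Multiset X := (List.ofFn u : List X)

lemma msOf_map_univ {r : ℕ} (u : Fin r → X) :
    msOf u = Multiset.map u Finset.univ.val := by
  rw [msOf, List.ofFn_eq_map]
  rfl

lemma msOf_comp_equiv {r r' : ℕ} (e : Fin r' ≃ Fin r) (u : Fin r → X) :
    msOf (u ∘ e) = msOf u := by
  rw [msOf_map_univ, msOf_map_univ]
  have h1 := congrArg Finset.val (Finset.map_univ_equiv e).symm
  rw [Finset.map_val] at h1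
  have : (Finset.univ : Finset (Fin r)).val
      = Multiset.map e (Finset.univ : Finset (Fin r')).val := by simpa using h1
  rw [this, Multiset.map_map]

lemma mem_msOf {r : ℕ} {u : Fin r → X} {a : X} : a ∈ msOf u ↔ ∃ i, u i = a := by
  simp [msOf, List.mem_ofFn]

lemma msOf_succ {r : ℕ} (u : Fin (r+1) → X) :
    msOf u = u 0 ::ₘ msOf (u ∘ Fin.succ) := by
  rw [msOf, List.ofFn_succ]
  rfl

lemma exists_comp_perm : ∀ {r : ℕ} (u v : Fin r → X), msOf u = msOf v →
    ∃ σ : Equiv.Perm (Fin r), u = v ∘ σ := by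
  intro r
  induction r with
  | zero => exact fun u v _ => ⟨1, funext fun k => k.elim0⟩
  | succ r ih =>
    intro u v h
    have h0 : u 0 ∈ msOf v := by
      rw [← h, msOf_succ]; exact Multiset.mem_cons_self _ _
    obtain ⟨j, hj⟩ := mem_msOf.1 h0
    set τ : Equiv.Perm (Fin (r+1)) := Equiv.swap 0 j with hτ
    have hv' : msOf (v ∘ τ) = msOf v := msOf_comp_equiv τ v
    have hv'0 : (v ∘ τ) 0 = u 0 := by
      simp [hτ, Function.comp, Equiv.swap_apply_left, hj]
    have htails : msOf (u ∘ Fin.succ) = msOf ((v ∘ τ) ∘ Fin.succ) := by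
      have := h.trans hv'.symm
      rw [msOf_succ, msOf_succ (v ∘ τ), hv'0] at this
      exact (Multiset.cons_inj_right _).1 this
    obtain ⟨σ', hσ'⟩ := ih _ _ htails
    refine ⟨(Equiv.Perm.decomposeFin.symm (0, σ')).trans τ, funext fun k => ?_⟩
    induction k using Fin.cases with
    | zero =>
      simp only [Function.comp, Equiv.trans_apply,
        Equiv.Perm.decomposeFin_symm_apply_zero]
      exact hj ▸ (by rw [Equiv.swap_apply_left])
    | succ i =>
      have h1 : (Equiv.Perm.decomposeFin.symm (0, σ')) i.succ = (σ' i).succ := by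
        rw [Equiv.Perm.decomposeFin_symm_apply_succ, Equiv.swap_self]
        rfl
      have := congrFun hσ' i
      simp only [Function.comp, Equiv.trans_apply, h1]
      simpa [Function.comp] using this

end PDAux

namespace PDAux2
open LpAux PDAux
variable {X : Type*} {d : X → X → ℝ≥0∞} {x₀ : X} {p : ℝ≥0∞}

lemma mFun_mem (s : Multiset X) (k : Fin s.toList.length) : mFun s k ∈ s := by
  rw [mFun]
  exact Multiset.mem_toList.1 (s.toList.get_mem _)

lemma padTo_mem (s : Multiset X) (r : ℕ) (k : Fin r) :
    padTo x₀ (mFun s) r k ∈ s ∨ padTo x₀ (mFun s) r k = x₀ := by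
  rw [padTo]
  split_ifs with h
  · exact Or.inl (mFun_mem s _)
  · exact Or.inr rfl

lemma padTo_lt (s : Multiset X) {r : ℕ} {k : Fin r} (h : (k : ℕ) < s.toList.length) :
    padTo x₀ (mFun s) r k = mFun s ⟨k, h⟩ := dif_pos h

lemma padTo_ge (s : Multiset X) {r : ℕ} {k : Fin r} (h : ¬ (k : ℕ) < s.toList.length) :
    padTo x₀ (mFun s) r k = x₀ := dif_neg h

lemma msOf_split {m n : ℕ} (U : Fin (m + n) → X) :
    msOf U = msOf (fun i => U (Fin.castAdd n i)) + msOf (fun j => U (Fin.natAdd m j)) := by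
  rw [msOf, List.ofFn_add, ← Multiset.coe_add]
  rfl

lemma msOf_pad (s : Multiset X) {r : ℕ} (h : Multiset.card s ≤ r) :
    msOf (padTo x₀ (mFun s) r) = s + Multiset.replicate (r - Multiset.card s) x₀ := by
  have hlen : s.toList.length = Multiset.card s := Multiset.length_toList s
  have hl : List.ofFn (padTo x₀ (mFun s) r)
      = s.toList ++ List.replicate (r - Multiset.card s) x₀ := by
    refine List.ext_getElem ?_ ?_
    · simp [hlen, Nat.add_sub_cancel' h]
    · intro i h1 h2
      rw [List.getElem_ofFn]
      by_cases hi : i < s.toList.length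
      · rw [List.getElem_append_left (by simpa using hi), padTo_lt s (by simpa using hi)]
        rfl
      · rw [List.getElem_append_right (by simpa using hi), padTo_ge s (by simpa using hi),
          List.getElem_replicate]
  rw [msOf, hl, ← Multiset.coe_add, Multiset.coe_toList, Multiset.coe_replicate]

lemma matchCost_le (hd : IsEPMetric d) {r : ℕ} (u v : Fin r → X) (σ : Equiv.Perm (Fin r)) :
    matchCost d p u v ≤ lpNorm p fun k => d (u k) (v (σ k)) := iInf_le _ σ

lemma matchCost_comp_right {r : ℕ} (u v : Fin r → X) (π : Equiv.Perm (Fin r)) :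
    matchCost d p u (v ∘ π) = matchCost d p u v := by
  rw [matchCost, matchCost]
  exact (Equiv.mulLeft π).surjective.iInf_comp
    (g := fun σ => lpNorm p fun k => d (u k) (v (σ k)))

lemma matchCost_comp_left {r : ℕ} (u v : Fin r → X) (π : Equiv.Perm (Fin r)) :
    matchCost d p (u ∘ π) v = matchCost d p u v := by
  rw [matchCost, matchCost]
  have h1 : ∀ σ : Equiv.Perm (Fin r), (lpNorm p fun k => d ((u ∘ π) k) (v (σ k)))
      = lpNorm p fun k => d (u k) (v ((σ * π⁻¹) k)) := by
    intro σ
    have : (fun k => d ((u ∘ π) k) (v (σ k)))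
        = (fun k => d (u k) (v ((σ * π⁻¹) k))) ∘ π := by
      funext k
      simp [Equiv.Perm.mul_apply]
    rw [this, lp_perm π]
  have hsurj : Function.Surjective (fun σ : Equiv.Perm (Fin r) => σ * π⁻¹) :=
    (Equiv.mulRight π⁻¹).surjective
  calc (⨅ σ, lpNorm p fun k => d ((u ∘ π) k) (v (σ k)))
      = ⨅ σ : Equiv.Perm (Fin r), lpNorm p fun k => d (u k) (v ((σ * π⁻¹) k)) :=
        iInf_congr h1
    _ = _ := hsurj.iInf_comp fun σ => lpNorm p fun k => d (u k) (v (σ k))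

lemma matchCost_symm (hd : IsEPMetric d) {r : ℕ} (u v : Fin r → X) :
    matchCost d p u v = matchCost d p v u := by
  rw [matchCost, matchCost]
  have h1 : ∀ σ : Equiv.Perm (Fin r), (lpNorm p fun k => d (u k) (v (σ k)))
      = lpNorm p fun k => d (v k) (u (σ⁻¹ k)) := by
    intro σ
    have : (fun k => d (v k) (u (σ⁻¹ k))) = (fun k => d (u k) (v (σ k))) ∘ ⇑σ⁻¹ := by
      funext k
      simp only [Function.comp_apply, Equiv.Perm.inv_def, Equiv.apply_symm_apply]
      exact hd.symm _ _
    rw [this, lp_perm σ⁻¹]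
  have hsurj : Function.Surjective (fun σ : Equiv.Perm (Fin r) => σ⁻¹) :=
    fun τ => ⟨τ⁻¹, inv_inv τ⟩
  calc (⨅ σ, lpNorm p fun k => d (u k) (v (σ k)))
      = ⨅ σ : Equiv.Perm (Fin r), lpNorm p fun k => d (v k) (u (σ⁻¹ k)) := iInf_congr h1
    _ = _ := hsurj.iInf_comp fun σ => lpNorm p fun k => d (v k) (u (σ k))

lemma matchCost_congr_ms {r : ℕ} {u u' v v' : Fin r → X}
    (hu : msOf u = msOf u') (hv : msOf v = msOf v') :
    matchCost d p u v = matchCost d p u' v' := by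
  obtain ⟨π, hπ⟩ := exists_comp_perm u' u hu.symm
  obtain ⟨π', hπ'⟩ := exists_comp_perm v' v hv.symm
  rw [hπ, hπ', matchCost_comp_left, matchCost_comp_right]

lemma matchCost_triangle (hd : IsEPMetric d) (hp : 1 ≤ p) {r : ℕ} (u v w : Fin r → X) :
    matchCost d p u w ≤ matchCost d p u v + matchCost d p v w := by
  have key : ∀ (σ τ : Equiv.Perm (Fin r)), matchCost d p u w ≤
      (lpNorm p fun k => d (u k) (v (σ k))) + lpNorm p fun k => d (v k) (w (τ k)) := by
    intro σ τ
    calc matchCost d p u w ≤ lpNorm p fun k => d (u k) (w ((σ.trans τ) k)) :=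
          iInf_le _ (σ.trans τ)
      _ ≤ lpNorm p fun k => d (u k) (v (σ k)) + d (v (σ k)) (w (τ (σ k))) :=
          lp_mono fun k => hd.triangle _ _ _
      _ ≤ (lpNorm p fun k => d (u k) (v (σ k))) + lpNorm p fun k => d (v (σ k)) (w (τ (σ k))) :=
          lp_add hp _ _
      _ = _ := by
        congr 1
        have : (fun k => d (v (σ k)) (w (τ (σ k)))) = (fun k => d (v k) (w (τ k))) ∘ σ := rfl
        rw [this, lp_perm]
  calc matchCost d p u w ≤ ⨅ (σ : Equiv.Perm (Fin r)) (τ : Equiv.Perm (Fin r)),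
        ((lpNorm p fun k => d (u k) (v (σ k))) + lpNorm p fun k => d (v k) (w (τ k))) :=
      le_iInf fun σ => le_iInf fun τ => key σ τ
    _ = matchCost d p u v + matchCost d p v w := by
      rw [matchCost, matchCost, ENNReal.iInf_add]
      exact (iInf_congr fun σ => by rw [ENNReal.add_iInf]).symm.symm

end PDAux2

namespace PDAux3
open LpAux PDAux PDAux2
variable {X : Type*} {d : X → X → ℝ≥0∞} {x₀ : X} {p : ℝ≥0∞}

lemma padTo_agree {n : ℕ} (f : Fin n → X) {r R : ℕ} (k : Fin R) (k' : Fin r)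
    (h : (k : ℕ) = (k' : ℕ)) : padTo x₀ f R k = padTo x₀ f r k' := by
  rcases k with ⟨kv, hk⟩
  rcases k' with ⟨kv', hk'⟩
  simp only at h
  subst h
  rfl

/-- The matching cost between two multisets padded to a common length `r`. -/
def padCost (d : X → X → ℝ≥0∞) (x₀ : X) (p : ℝ≥0∞) (s t : Multiset X) (r : ℕ) : ℝ≥0∞ :=
  matchCost d p (padTo x₀ (mFun s) r) (padTo x₀ (mFun t) r)

lemma WpM_eq_padCost (s t : Multiset X) :
    WpM d x₀ p s t = padCost d x₀ p s t (Multiset.card s + Multiset.card t) := rfl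

lemma padCost_symm (hd : IsEPMetric d) (s t : Multiset X) (r : ℕ) :
    padCost d x₀ p s t r = padCost d x₀ p t s r := matchCost_symm hd _ _

lemma padCost_add_le (hd : IsEPMetric d) (hp : 1 ≤ p) {s t : Multiset X} {r : ℕ} (m : ℕ)
    (hs : Multiset.card s ≤ r) (ht : Multiset.card t ≤ r) :
    padCost d x₀ p s t (r + m) ≤ padCost d x₀ p s t r := by
  rw [padCost, padCost, matchCost, matchCost]
  refine le_iInf fun σ => ?_
  set Pm : Equiv.Perm (Fin (r + m)) :=
    (finSumFinEquiv.symm.trans ((σ.sumCongr (Equiv.refl (Fin m))).trans finSumFinEquiv)) with hPm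
  refine le_trans (iInf_le _ Pm) (le_of_eq ?_)
  have hls : (Multiset.toList s).length = Multiset.card s := Multiset.length_toList s
  have hlt : (Multiset.toList t).length = Multiset.card t := Multiset.length_toList t
  refine lp_extend_zero hp (Nat.le_add_right r m) _ _ ?_ ?_
  · intro k hk
    have hcast : k = Fin.castAdd m ⟨(k : ℕ), hk⟩ := by ext; rfl
    have hPmk : Pm k = Fin.castAdd m (σ ⟨(k : ℕ), hk⟩) := by
      have h5 : Pm (Fin.castAdd m ⟨(k : ℕ), hk⟩) = Fin.castAdd m (σ ⟨(k : ℕ), hk⟩) := by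
        rw [hPm, Equiv.trans_apply, Equiv.trans_apply, finSumFinEquiv_symm_apply_castAdd,
          Equiv.sumCongr_apply, Sum.map_inl, finSumFinEquiv_apply_left]
      rwa [← hcast] at h5
    rw [hPmk]
    exact congrArg₂ d (padTo_agree _ _ _ rfl) (padTo_agree _ _ _ rfl)
  · intro k hk
    have hk2 : (k : ℕ) - r < m := by omega
    have hj : Fin.natAdd r ⟨(k : ℕ) - r, hk2⟩ = k := by
      ext
      simp
      omega
    have hPmk : Pm k = k := by
      have h5 : Pm (Fin.natAdd r ⟨(k : ℕ) - r, hk2⟩) = Fin.natAdd r ⟨(k : ℕ) - r, hk2⟩ := by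
        rw [hPm, Equiv.trans_apply, Equiv.trans_apply, finSumFinEquiv_symm_apply_natAdd,
          Equiv.sumCongr_apply, Sum.map_inr, Equiv.refl_apply, finSumFinEquiv_apply_right]
      rw [← hj]
      exact h5
    rw [hPmk, padTo_ge s (by omega), padTo_ge t (by omega), hd.refl]

lemma padCost_mono_len (hd : IsEPMetric d) (hp : 1 ≤ p) {s t : Multiset X} {r R : ℕ}
    (hs : Multiset.card s ≤ r) (ht : Multiset.card t ≤ r) (hrR : r ≤ R) :
    padCost d x₀ p s t R ≤ padCost d x₀ p s t r := by
  have : R = r + (R - r) := by omega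
  rw [this]
  exact padCost_add_le hd hp _ hs ht

lemma rep_pad_eq {s s' : Multiset X} {a b : ℕ}
    (hrel : s + Multiset.replicate a x₀ = s' + Multiset.replicate b x₀) {r : ℕ}
    (hr : Multiset.card s + a ≤ r) :
    s + Multiset.replicate (r - Multiset.card s) x₀
      = s' + Multiset.replicate (r - Multiset.card s') x₀ := by
  have hcard : Multiset.card s + a = Multiset.card s' + b := by
    have := congrArg Multiset.card hrel
    simpa using this
  obtain ⟨c, hc⟩ : ∃ c, r - Multiset.card s - a = c := ⟨_, rfl⟩
  have h1 : r - Multiset.card s = a + c := by omega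
  have h2 : r - Multiset.card s' = b + c := by omega
  calc s + Multiset.replicate (r - Multiset.card s) x₀
      = (s + Multiset.replicate a x₀) + Multiset.replicate c x₀ := by
        rw [h1, Multiset.replicate_add, ← add_assoc]
    _ = (s' + Multiset.replicate b x₀) + Multiset.replicate c x₀ := by rw [hrel]
    _ = s' + Multiset.replicate (r - Multiset.card s') x₀ := by
        rw [h2, Multiset.replicate_add, ← add_assoc]

lemma mk'_eq {s t : Multiset X} : (diagCon x₀).mk' s = (diagCon x₀).mk' t ↔
    ∃ a b : ℕ, s + Multiset.replicate a x₀ = t + Multiset.replicate b x₀ :=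
  AddCon.eq _

lemma Wp_le_WpM {α β : Diagram X x₀} {s t : Multiset X}
    (hs : (diagCon x₀).mk' s = α) (ht : (diagCon x₀).mk' t = β) :
    Wp d x₀ p α β ≤ WpM d x₀ p s t := by
  rw [Wp]
  exact iInf_le_of_le s (iInf_le_of_le t (iInf_le_of_le hs (iInf_le_of_le ht le_rfl)))

lemma le_Wp {α β : Diagram X x₀} {c : ℝ≥0∞}
    (h : ∀ s t : Multiset X, (diagCon x₀).mk' s = α → (diagCon x₀).mk' t = β →
      c ≤ WpM d x₀ p s t) : c ≤ Wp d x₀ p α β :=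
  le_iInf fun s => le_iInf fun t => le_iInf fun hs => le_iInf fun ht => h s t hs ht

lemma Wp_le_padCost (hd : IsEPMetric d) (hp : 1 ≤ p) {α β : Diagram X x₀}
    {s t : Multiset X} {r : ℕ} (hs : (diagCon x₀).mk' s = α) (ht : (diagCon x₀).mk' t = β)
    (hr : Multiset.card s + Multiset.card t ≤ r) :
    Wp d x₀ p α β ≤ padCost d x₀ p s t r := by
  set m := r - Multiset.card s - Multiset.card t with hm
  set s' := s + Multiset.replicate m x₀ with hs'
  have hcs' : Multiset.card s' = Multiset.card s + m := by simp [hs']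
  have hs'card : Multiset.card s' + Multiset.card t = r := by omega
  have hmk : (diagCon x₀).mk' s' = α := by
    rw [← hs]
    exact mk'_eq.2 ⟨0, m, by simp [hs']⟩
  have h2 : WpM d x₀ p s' t = padCost d x₀ p s' t r := by rw [WpM_eq_padCost, hs'card]
  have h3 : padCost d x₀ p s' t r = padCost d x₀ p s t r := by
    rw [padCost, padCost]
    refine matchCost_congr_ms ?_ rfl
    have hrel2 : s + Multiset.replicate m x₀ = s' + Multiset.replicate 0 x₀ := by
      simp [hs']
    have hkey := rep_pad_eq (x₀ := x₀) hrel2 (r := r) (by omega)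
    rw [msOf_pad s' (by omega), msOf_pad s (by omega), ← hkey]
  calc Wp d x₀ p α β ≤ WpM d x₀ p s' t := Wp_le_WpM hmk ht
    _ = _ := h2.trans h3

end PDAux3

namespace PDAux4
open LpAux PDAux PDAux2 PDAux3
variable {X : Type*} {d : X → X → ℝ≥0∞} {x₀ : X} {p : ℝ≥0∞}

lemma WpM_self (hd : IsEPMetric d) (hp : 1 ≤ p) (s : Multiset X) : WpM d x₀ p s s = 0 := by
  refine le_antisymm ?_ zero_le
  refine le_trans (iInf_le _ (1 : Equiv.Perm (Fin (Multiset.card s + Multiset.card s)))) ?_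
  refine le_of_eq (lp_zero hp fun k => ?_)
  simp only [Equiv.Perm.coe_one, id_eq]
  exact hd.refl _

lemma Wp_refl (hd : IsEPMetric d) (hp : 1 ≤ p) (α : Diagram X x₀) : Wp d x₀ p α α = 0 := by
  obtain ⟨s, hs⟩ := AddCon.mk'_surjective α
  exact le_antisymm (le_trans (Wp_le_WpM hs hs) (le_of_eq (WpM_self hd hp s))) zero_le

lemma Wp_symm_le (hd : IsEPMetric d) (hp : 1 ≤ p) (α β : Diagram X x₀) :
    Wp d x₀ p α β ≤ Wp d x₀ p β α :=
  le_Wp fun t s ht hs => by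
    rw [WpM_eq_padCost, padCost_symm hd]
    exact Wp_le_padCost hd hp hs ht (by omega)

lemma Wp_symm (hd : IsEPMetric d) (hp : 1 ≤ p) (α β : Diagram X x₀) :
    Wp d x₀ p α β = Wp d x₀ p β α :=
  le_antisymm (Wp_symm_le hd hp α β) (Wp_symm_le hd hp β α)

lemma exists_rep_lt {α β : Diagram X x₀} {c : ℝ≥0∞} (h : Wp d x₀ p α β < c) :
    ∃ s t : Multiset X, (diagCon x₀).mk' s = α ∧ (diagCon x₀).mk' t = β ∧
      WpM d x₀ p s t < c := by
  rw [Wp] at h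
  simp only [iInf_lt_iff] at h
  obtain ⟨s, t, hs, ht, h⟩ := h
  exact ⟨s, t, hs, ht, h⟩

lemma Wp_triangle (hd : IsEPMetric d) (hp : 1 ≤ p) (α β γ : Diagram X x₀) :
    Wp d x₀ p α γ ≤ Wp d x₀ p α β + Wp d x₀ p β γ := by
  refine ENNReal.le_of_forall_pos_le_add fun ε hε hlt => ?_
  have hAB : Wp d x₀ p α β ≠ ∞ := (lt_of_le_of_lt le_self_add hlt).ne
  have hBC : Wp d x₀ p β γ ≠ ∞ := (lt_of_le_of_lt le_add_self hlt).ne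
  have hδ : ((ε : ℝ≥0∞) / 2) ≠ 0 := by
    simp [ENNReal.div_eq_zero_iff, hε.ne']
  obtain ⟨s, t, hs, ht, h1⟩ := exists_rep_lt (ENNReal.lt_add_right hAB hδ :
    Wp d x₀ p α β < Wp d x₀ p α β + (ε : ℝ≥0∞) / 2)
  obtain ⟨t', u, ht', hu, h2⟩ := exists_rep_lt (ENNReal.lt_add_right hBC hδ :
    Wp d x₀ p β γ < Wp d x₀ p β γ + (ε : ℝ≥0∞) / 2)
  obtain ⟨a, b, hab⟩ := mk'_eq.1 (ht.trans ht'.symm)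
  set N := Multiset.card s + Multiset.card t + a + Multiset.card t' + Multiset.card u with hN
  have hcab : Multiset.card t + a = Multiset.card t' + b := by
    have := congrArg Multiset.card hab
    simpa using this
  have key : Wp d x₀ p α γ ≤ padCost d x₀ p s u N := Wp_le_padCost hd hp hs hu (by omega)
  have hmid : padCost d x₀ p t' u N
      = matchCost d p (padTo x₀ (mFun t) N) (padTo x₀ (mFun u) N) := by
    rw [padCost]
    refine matchCost_congr_ms ?_ rfl
    rw [msOf_pad t' (by omega), msOf_pad t (by omega)]
    exact (rep_pad_eq hab (by omega)).symm
  have htri : padCost d x₀ p s u N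
      ≤ padCost d x₀ p s t N + padCost d x₀ p t' u N := by
    rw [padCost, padCost, hmid]
    exact matchCost_triangle hd hp _ _ _
  have hst : padCost d x₀ p s t N ≤ WpM d x₀ p s t := by
    rw [WpM_eq_padCost]
    exact padCost_mono_len hd hp (by omega) (by omega) (by omega)
  have htu : padCost d x₀ p t' u N ≤ WpM d x₀ p t' u := by
    rw [WpM_eq_padCost]
    exact padCost_mono_len hd hp (by omega) (by omega) (by omega)
  calc Wp d x₀ p α γ ≤ padCost d x₀ p s t N + padCost d x₀ p t' u N := key.trans htri
    _ ≤ WpM d x₀ p s t + WpM d x₀ p t' u := add_le_add hst htu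
    _ ≤ (Wp d x₀ p α β + (ε : ℝ≥0∞) / 2) + (Wp d x₀ p β γ + (ε : ℝ≥0∞) / 2) :=
        add_le_add h1.le h2.le
    _ = Wp d x₀ p α β + Wp d x₀ p β γ + ((ε : ℝ≥0∞) / 2 + (ε : ℝ≥0∞) / 2) :=
        add_add_add_comm _ _ _ _
    _ = Wp d x₀ p α β + Wp d x₀ p β γ + ε := by rw [ENNReal.add_halves]

end PDAux4

namespace PDAux5
open LpAux PDAux PDAux2 PDAux3 PDAux4
variable {X : Type*} {d : X → X → ℝ≥0∞} {x₀ : X} {p : ℝ≥0∞}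

lemma exists_rep_perm_lt {α β : Diagram X x₀} {c : ℝ≥0∞} (h : Wp d x₀ p α β < c) :
    ∃ (s t : Multiset X) (_ : (diagCon x₀).mk' s = α) (_ : (diagCon x₀).mk' t = β)
      (σ : Equiv.Perm (Fin (Multiset.card s + Multiset.card t))),
      lpNorm p (fun k => d (padTo x₀ (mFun s) (Multiset.card s + Multiset.card t) k)
        (padTo x₀ (mFun t) (Multiset.card s + Multiset.card t) (σ k))) < c := by
  obtain ⟨s, t, hs, ht, h⟩ := exists_rep_lt h
  rw [WpM, matchCost] at h
  simp only [iInf_lt_iff] at h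
  obtain ⟨σ, hσ⟩ := h
  exact ⟨s, t, hs, ht, σ, hσ⟩

lemma padCost_combine (hd : IsEPMetric d) (hp : 1 ≤ p) (s s' t t' : Multiset X)
    {r₁ r₂ : ℕ} (hr₁ : r₁ = Multiset.card s + Multiset.card s')
    (hr₂ : r₂ = Multiset.card t + Multiset.card t')
    (σ : Equiv.Perm (Fin r₁)) (τ : Equiv.Perm (Fin r₂)) :
    padCost d x₀ p (s + t) (s' + t') (r₁ + r₂)
      ≤ lpNorm p
        ![lpNorm p (fun k => d (padTo x₀ (mFun s) r₁ k) (padTo x₀ (mFun s') r₁ (σ k))),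
          lpNorm p (fun k => d (padTo x₀ (mFun t) r₂ k) (padTo x₀ (mFun t') r₂ (τ k)))] := by
  set U : Fin (r₁ + r₂) → X :=
    fun k => Sum.elim (padTo x₀ (mFun s) r₁) (padTo x₀ (mFun t) r₂) (finSumFinEquiv.symm k)
    with hU
  set V : Fin (r₁ + r₂) → X :=
    fun k => Sum.elim (padTo x₀ (mFun s') r₁) (padTo x₀ (mFun t') r₂) (finSumFinEquiv.symm k)
    with hV
  have hU1 : (fun i : Fin r₁ => U (Fin.castAdd r₂ i)) = padTo x₀ (mFun s) r₁ := by
    funext i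
    rw [hU]
    simp
  have hU2 : (fun j : Fin r₂ => U (Fin.natAdd r₁ j)) = padTo x₀ (mFun t) r₂ := by
    funext j
    rw [hU]
    simp
  have hV1 : (fun i : Fin r₁ => V (Fin.castAdd r₂ i)) = padTo x₀ (mFun s') r₁ := by
    funext i
    rw [hV]
    simp
  have hV2 : (fun j : Fin r₂ => V (Fin.natAdd r₁ j)) = padTo x₀ (mFun t') r₂ := by
    funext j
    rw [hV]
    simp
  have hmsU : msOf (padTo x₀ (mFun (s + t)) (r₁ + r₂)) = msOf U := by
    rw [msOf_split U, hU1, hU2, msOf_pad s (by omega), msOf_pad t (by omega),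
      msOf_pad (s + t) (by simp; omega)]
    have e1 : r₁ - Multiset.card s = Multiset.card s' := by omega
    have e2 : r₂ - Multiset.card t = Multiset.card t' := by omega
    have e3 : r₁ + r₂ - Multiset.card (s + t) = Multiset.card s' + Multiset.card t' := by
      simp; omega
    rw [e1, e2, e3, Multiset.replicate_add]
    exact add_add_add_comm s (Multiset.replicate (Multiset.card s') x₀) t
      (Multiset.replicate (Multiset.card t') x₀) ▸ by
        rw [← add_add_add_comm]
  have hmsV : msOf (padTo x₀ (mFun (s' + t')) (r₁ + r₂)) = msOf V := by
    rw [msOf_split V, hV1, hV2, msOf_pad s' (by omega), msOf_pad t' (by omega),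
      msOf_pad (s' + t') (by simp; omega)]
    have e1 : r₁ - Multiset.card s' = Multiset.card s := by omega
    have e2 : r₂ - Multiset.card t' = Multiset.card t := by omega
    have e3 : r₁ + r₂ - Multiset.card (s' + t') = Multiset.card s + Multiset.card t := by
      simp; omega
    rw [e1, e2, e3, Multiset.replicate_add, ← add_add_add_comm]
  have hstep : padCost d x₀ p (s + t) (s' + t') (r₁ + r₂) = matchCost d p U V := by
    rw [padCost]
    exact matchCost_congr_ms hmsU hmsV
  set P : Equiv.Perm (Fin (r₁ + r₂)) :=
    finSumFinEquiv.symm.trans ((σ.sumCongr τ).trans finSumFinEquiv) with hP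
  have hPl : ∀ i : Fin r₁, P (Fin.castAdd r₂ i) = Fin.castAdd r₂ (σ i) := by
    intro i
    rw [hP, Equiv.trans_apply, Equiv.trans_apply, finSumFinEquiv_symm_apply_castAdd,
      Equiv.sumCongr_apply, Sum.map_inl, finSumFinEquiv_apply_left]
  have hPr : ∀ j : Fin r₂, P (Fin.natAdd r₁ j) = Fin.natAdd r₁ (τ j) := by
    intro j
    rw [hP, Equiv.trans_apply, Equiv.trans_apply, finSumFinEquiv_symm_apply_natAdd,
      Equiv.sumCongr_apply, Sum.map_inr, finSumFinEquiv_apply_right]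
  have hconcat : lpNorm p (fun k => d (U k) (V (P k)))
      = lpNorm p ![lpNorm p (fun i => d (U (Fin.castAdd r₂ i)) (V (Fin.castAdd r₂ (σ i)))),
          lpNorm p (fun j => d (U (Fin.natAdd r₁ j)) (V (Fin.natAdd r₁ (τ j))))] := by
    refine lp_concat hp _ _ _ ?_ ?_
    · intro i
      rw [hPl i]
    · intro j
      rw [hPr j]
  calc padCost d x₀ p (s + t) (s' + t') (r₁ + r₂)
      = matchCost d p U V := hstep
    _ ≤ lpNorm p (fun k => d (U k) (V (P k))) := iInf_le _ P
    _ = _ := by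
      rw [hconcat]
      have g1 : (fun i => d (U (Fin.castAdd r₂ i)) (V (Fin.castAdd r₂ (σ i))))
          = fun i => d (padTo x₀ (mFun s) r₁ i) (padTo x₀ (mFun s') r₁ (σ i)) := by
        funext i
        rw [congrFun hU1 i, congrFun hV1 (σ i)]
      have g2 : (fun j => d (U (Fin.natAdd r₁ j)) (V (Fin.natAdd r₁ (τ j))))
          = fun j => d (padTo x₀ (mFun t) r₂ j) (padTo x₀ (mFun t') r₂ (τ j)) := by
        funext j
        rw [congrFun hU2 j, congrFun hV2 (τ j)]
      rw [g1, g2]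

end PDAux5

namespace PDAux6
open LpAux PDAux PDAux2 PDAux3 PDAux4 PDAux5
variable {X : Type*} {d : X → X → ℝ≥0∞} {x₀ : X} {p : ℝ≥0∞}

lemma Wp_subadd (hd : IsEPMetric d) (hp : 1 ≤ p) (α α' β β' : Diagram X x₀) :
    Wp d x₀ p (α + β) (α' + β')
      ≤ lpNorm p ![Wp d x₀ p α α', Wp d x₀ p β β'] := by
  refine ENNReal.le_of_forall_pos_le_add fun ε hε hlt => ?_
  have hA : Wp d x₀ p α α' ≠ ∞ := by
    have h0 := lp_coord hp ![Wp d x₀ p α α', Wp d x₀ p β β'] 0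
    simp only [Matrix.cons_val_zero] at h0
    exact (lt_of_le_of_lt h0 hlt).ne
  have hB : Wp d x₀ p β β' ≠ ∞ := by
    have h0 := lp_coord hp ![Wp d x₀ p α α', Wp d x₀ p β β'] 1
    simp only [Matrix.cons_val_one, Matrix.head_cons] at h0
    exact (lt_of_le_of_lt h0 hlt).ne
  have hδ : ((ε : ℝ≥0∞) / 2) ≠ 0 := by simp [ENNReal.div_eq_zero_iff, hε.ne']
  obtain ⟨s, s', hs, hs', σ, h1⟩ := exists_rep_perm_lt (ENNReal.lt_add_right hA hδ)
  obtain ⟨t, t', ht, ht', τ, h2⟩ := exists_rep_perm_lt (ENNReal.lt_add_right hB hδ)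
  have hmk : (diagCon x₀).mk' (s + t) = α + β := by rw [map_add, hs, ht]
  have hmk' : (diagCon x₀).mk' (s' + t') = α' + β' := by rw [map_add, hs', ht']
  have hWp : Wp d x₀ p (α + β) (α' + β') ≤ padCost d x₀ p (s + t) (s' + t')
      ((Multiset.card s + Multiset.card s') + (Multiset.card t + Multiset.card t')) :=
    Wp_le_padCost hd hp hmk hmk' (by simp; omega)
  have hcomb := padCost_combine (x₀ := x₀) hd hp s s' t t' rfl rfl σ τ
  have hpair : lpNorm p
      ![lpNorm p (fun k => d (padTo x₀ (mFun s) (Multiset.card s + Multiset.card s') k)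
          (padTo x₀ (mFun s') (Multiset.card s + Multiset.card s') (σ k))),
        lpNorm p (fun k => d (padTo x₀ (mFun t) (Multiset.card t + Multiset.card t') k)
          (padTo x₀ (mFun t') (Multiset.card t + Multiset.card t') (τ k)))]
      ≤ lpNorm p ![Wp d x₀ p α α' + (ε : ℝ≥0∞) / 2, Wp d x₀ p β β' + (ε : ℝ≥0∞) / 2] := by
    refine lp_mono fun i => ?_
    fin_cases i
    · simpa using h1.le
    · simpa using h2.le
  have hsplit : lpNorm p ![Wp d x₀ p α α' + (ε : ℝ≥0∞) / 2, Wp d x₀ p β β' + (ε : ℝ≥0∞) / 2]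
      ≤ lpNorm p ![Wp d x₀ p α α', Wp d x₀ p β β']
        + lpNorm p ![(ε : ℝ≥0∞) / 2, (ε : ℝ≥0∞) / 2] := by
    have heq : ![Wp d x₀ p α α' + (ε : ℝ≥0∞) / 2, Wp d x₀ p β β' + (ε : ℝ≥0∞) / 2]
        = fun i => ![Wp d x₀ p α α', Wp d x₀ p β β'] i
            + ![(ε : ℝ≥0∞) / 2, (ε : ℝ≥0∞) / 2] i := by
      funext i
      fin_cases i <;> simp
    rw [heq]
    exact lp_add hp _ _
  calc Wp d x₀ p (α + β) (α' + β')
      ≤ lpNorm p ![Wp d x₀ p α α' + (ε : ℝ≥0∞) / 2, Wp d x₀ p β β' + (ε : ℝ≥0∞) / 2] :=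
        (hWp.trans hcomb).trans hpair
    _ ≤ lpNorm p ![Wp d x₀ p α α', Wp d x₀ p β β']
        + lpNorm p ![(ε : ℝ≥0∞) / 2, (ε : ℝ≥0∞) / 2] := hsplit
    _ ≤ lpNorm p ![Wp d x₀ p α α', Wp d x₀ p β β'] + ((ε : ℝ≥0∞) / 2 + (ε : ℝ≥0∞) / 2) :=
        add_le_add_right (lp_pair_le_add hp _ _) _
    _ = lpNorm p ![Wp d x₀ p α α', Wp d x₀ p β β'] + ε := by rw [ENNReal.add_halves]

end PDAux6

namespace PDAux7
open LpAux PDAux PDAux2 PDAux3 PDAux4 PDAux5 PDAux6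
variable {X : Type*} {d : X → X → ℝ≥0∞} {x₀ : X} {p : ℝ≥0∞}

lemma cost_lower (hd : IsEPMetric d) (hp : 1 ≤ p)
    (hB : ∀ x y : X, d x y ≤ lpNorm p ![d x x₀, d x₀ y]) (x y : X) {r : ℕ}
    (u v : Fin r → X) (hu : ∀ k, u k = x ∨ u k = x₀) (hv : ∀ k, v k = y ∨ v k = x₀)
    (hux : ∃ i, u i = x) (hvy : ∃ j, v j = y) (σ : Equiv.Perm (Fin r)) :
    d x y ≤ lpNorm p (fun k => d (u k) (v (σ k))) := by
  obtain ⟨i, hi⟩ := hux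
  obtain ⟨j, hj⟩ := hvy
  by_cases hcase : v (σ i) = y
  · have heq : d x y = d (u i) (v (σ i)) := by rw [hi, hcase]
    rw [heq]
    exact lp_coord hp _ i
  · have hvσi : v (σ i) = x₀ := (hv _).resolve_left hcase
    have hσj' : σ (σ⁻¹ j) = j := Equiv.apply_symm_apply σ j
    by_cases hcase2 : u (σ⁻¹ j) = x
    · have heq : d x y = d (u (σ⁻¹ j)) (v (σ (σ⁻¹ j))) := by rw [hcase2, hσj', hj]
      rw [heq]
      exact lp_coord hp _ (σ⁻¹ j)
    · have huj' : u (σ⁻¹ j) = x₀ := (hu _).resolve_left hcase2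
      have hij' : i ≠ σ⁻¹ j := fun h => hcase (by rw [h, hσj', hj])
      refine le_trans (hB x y) (le_trans (le_of_eq ?_)
        (lp_two_coord hp (fun k => d (u k) (v (σ k))) hij'))
      show lpNorm p ![d x x₀, d x₀ y]
        = lpNorm p ![d (u i) (v (σ i)), d (u (σ⁻¹ j)) (v (σ (σ⁻¹ j)))]
      rw [hi, hvσi, huj', hσj', hj]

lemma rep_singleton {x : X} {s : Multiset X} (h : (diagCon x₀).mk' s = diagι x₀ x) :
    (∀ z ∈ s, z = x ∨ z = x₀) ∧ (x ≠ x₀ → x ∈ s) := by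
  rw [diagι] at h
  obtain ⟨a, b, hab⟩ := mk'_eq.1 h
  constructor
  · intro z hz
    have hz2 : z ∈ s + Multiset.replicate a x₀ := Multiset.mem_add.2 (Or.inl hz)
    rw [hab] at hz2
    rcases Multiset.mem_add.1 hz2 with h1 | h1
    · exact Or.inl (Multiset.mem_singleton.1 h1)
    · exact Or.inr (Multiset.eq_of_mem_replicate h1)
  · intro hxx
    have hx2 : x ∈ ({x} : Multiset X) + Multiset.replicate b x₀ :=
      Multiset.mem_add.2 (Or.inl (Multiset.mem_singleton_self x))
    rw [← hab] at hx2
    rcases Multiset.mem_add.1 hx2 with h1 | h1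
    · exact h1
    · exact absurd (Multiset.eq_of_mem_replicate h1) hxx

lemma dxy_le_WpM (hd : IsEPMetric d) (hp : 1 ≤ p)
    (hB : ∀ x y : X, d x y ≤ lpNorm p ![d x x₀, d x₀ y]) {x y : X} {s t : Multiset X}
    (hs : (diagCon x₀).mk' s = diagι x₀ x) (ht : (diagCon x₀).mk' t = diagι x₀ y) :
    d x y ≤ WpM d x₀ p s t := by
  obtain ⟨hselem, hsx⟩ := rep_singleton hs
  obtain ⟨htelem, hty⟩ := rep_singleton ht
  rw [WpM, matchCost]
  refine le_iInf fun σ => ?_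
  by_cases hr : Multiset.card s + Multiset.card t = 0
  · have hs0 : s = 0 := by rw [← Multiset.card_eq_zero]; omega
    have ht0 : t = 0 := by rw [← Multiset.card_eq_zero]; omega
    have hx : x = x₀ := by
      by_contra hxx
      have hmem := hsx hxx
      rw [hs0] at hmem
      exact absurd hmem (Multiset.notMem_zero x)
    have hy : y = x₀ := by
      by_contra hyy
      have hmem := hty hyy
      rw [ht0] at hmem
      exact absurd hmem (Multiset.notMem_zero y)
    rw [hx, hy, hd.refl]
    exact zero_le
  · have hls : s.toList.length = Multiset.card s := Multiset.length_toList s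
    have hlt : t.toList.length = Multiset.card t := Multiset.length_toList t
    refine cost_lower hd hp hB x y _ _ ?_ ?_ ?_ ?_ σ
    · intro k
      rcases padTo_mem (x₀ := x₀) s _ k with h | h
      · rcases hselem _ h with h' | h'
        · exact Or.inl h'
        · exact Or.inr h'
      · exact Or.inr h
    · intro k
      rcases padTo_mem (x₀ := x₀) t _ k with h | h
      · rcases htelem _ h with h' | h'
        · exact Or.inl h'
        · exact Or.inr h'
      · exact Or.inr h
    · by_cases hxx : x = x₀
      · have hpos : 0 < Multiset.card s + Multiset.card t := by omega
        refine ⟨⟨0, hpos⟩, ?_⟩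
        rcases padTo_mem (x₀ := x₀) s (Multiset.card s + Multiset.card t) ⟨0, hpos⟩ with h | h
        · rcases hselem _ h with h' | h'
          · exact h'
          · rw [h', hxx]
        · rw [h, hxx]
      · have hmem : x ∈ s.toList := Multiset.mem_toList.2 (hsx hxx)
        obtain ⟨n, hn⟩ := List.mem_iff_get.1 hmem
        have hn2 : (n : ℕ) < Multiset.card s + Multiset.card t := by
          have := n.2
          omega
        refine ⟨⟨(n : ℕ), hn2⟩, ?_⟩
        rw [padTo_lt s (by simpa using n.2)]
        rw [mFun]
        have hfin : (⟨(n : ℕ), by simpa using n.2⟩ : Fin s.toList.length) = n :=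
          Fin.ext rfl
        rw [hfin]
        exact hn
    · by_cases hyy : y = x₀
      · have hpos : 0 < Multiset.card s + Multiset.card t := by omega
        refine ⟨⟨0, hpos⟩, ?_⟩
        rcases padTo_mem (x₀ := x₀) t (Multiset.card s + Multiset.card t) ⟨0, hpos⟩ with h | h
        · rcases htelem _ h with h' | h'
          · exact h'
          · rw [h', hyy]
        · rw [h, hyy]
      · have hmem : y ∈ t.toList := Multiset.mem_toList.2 (hty hyy)
        obtain ⟨n, hn⟩ := List.mem_iff_get.1 hmem
        have hn2 : (n : ℕ) < Multiset.card s + Multiset.card t := by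
          have := n.2
          omega
        refine ⟨⟨(n : ℕ), hn2⟩, ?_⟩
        rw [padTo_lt t (by simpa using n.2)]
        rw [mFun]
        have hfin : (⟨(n : ℕ), by simpa using n.2⟩ : Fin t.toList.length) = n :=
          Fin.ext rfl
        rw [hfin]
        exact hn

lemma pad_single_lt (x : X) {r : ℕ} (k : Fin r) (hk : (k : ℕ) = 0) :
    padTo x₀ (mFun {x}) r k = x := by
  have h1 : ({x} : Multiset X).toList.length = 1 := by
    rw [Multiset.length_toList]
    simp
  have h0 : (k : ℕ) < ({x} : Multiset X).toList.length := by omega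
  rw [padTo_lt _ h0]
  exact Multiset.mem_singleton.1 (mFun_mem {x} _)

lemma pad_single_ge (x : X) {r : ℕ} (k : Fin r) (hk : (k : ℕ) ≠ 0) :
    padTo x₀ (mFun {x}) r k = x₀ := by
  have h1 : ({x} : Multiset X).toList.length = 1 := by
    rw [Multiset.length_toList]
    simp
  exact padTo_ge _ (by omega)

lemma Wp_le_d (hd : IsEPMetric d) (hp : 1 ≤ p) (x y : X) :
    Wp d x₀ p (diagι x₀ x) (diagι x₀ y) ≤ d x y := by
  have h := Wp_le_padCost (x₀ := x₀) hd hp (s := {x}) (t := {y}) rfl rfl (r := 2) (by simp)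
  refine h.trans ?_
  rw [padCost]
  refine le_trans (iInf_le _ 1) ?_
  have hw : (fun k : Fin 2 => d (padTo x₀ (mFun {x}) 2 k)
      (padTo x₀ (mFun {y}) 2 ((1 : Equiv.Perm (Fin 2)) k))) = ![d x y, 0] := by
    funext k
    fin_cases k
    · show d (padTo x₀ (mFun {x}) 2 0)
        (padTo x₀ (mFun {y}) 2 ((1 : Equiv.Perm (Fin 2)) 0)) = d x y
      rw [Equiv.Perm.one_apply, pad_single_lt x _ rfl, pad_single_lt y _ rfl]
    · show d (padTo x₀ (mFun {x}) 2 1)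
        (padTo x₀ (mFun {y}) 2 ((1 : Equiv.Perm (Fin 2)) 1)) = 0
      rw [Equiv.Perm.one_apply, pad_single_ge x _ (by norm_num),
        pad_single_ge y _ (by norm_num), hd.refl]
  rw [hw, lp_pair_zero hp]

lemma Wp_le_pair (hd : IsEPMetric d) (hp : 1 ≤ p) (x y : X) :
    Wp d x₀ p (diagι x₀ x) (diagι x₀ y) ≤ lpNorm p ![d x x₀, d x₀ y] := by
  have h := Wp_le_padCost (x₀ := x₀) hd hp (s := {x}) (t := {y}) rfl rfl (r := 2) (by simp)
  refine h.trans ?_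
  rw [padCost]
  refine le_trans (iInf_le _ (Equiv.swap 0 1)) ?_
  have hw : (fun k : Fin 2 => d (padTo x₀ (mFun {x}) 2 k)
      (padTo x₀ (mFun {y}) 2 ((Equiv.swap (0 : Fin 2) 1) k))) = ![d x x₀, d x₀ y] := by
    funext k
    fin_cases k
    · show d (padTo x₀ (mFun {x}) 2 0)
        (padTo x₀ (mFun {y}) 2 ((Equiv.swap (0 : Fin 2) 1) 0)) = d x x₀
      rw [Equiv.swap_apply_left, pad_single_lt x _ rfl, pad_single_ge y _ (by norm_num)]
    · show d (padTo x₀ (mFun {x}) 2 1)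
        (padTo x₀ (mFun {y}) 2 ((Equiv.swap (0 : Fin 2) 1) 1)) = d x₀ y
      rw [Equiv.swap_apply_right, pad_single_ge x _ (by norm_num), pad_single_lt y _ rfl]
  rw [hw]

end PDAux7

open LpAux PDAux PDAux2 PDAux3 PDAux4 PDAux5 PDAux6 PDAux7 in
/-- TFAE: (1) there is a p-subadditive extended pseudometric on `D(X,x₀)` pulling back
to `d`; (2) `d` satisfies the p-strengthened triangle inequality at `x₀`;
(3) `W_p` pulls back to `d` along the canonical map. -/
theorem pullback_tfae (d : X → X → ℝ≥0∞) (hd : IsEPMetric d) (x₀ : X)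
    (p : ℝ≥0∞) (hp : 1 ≤ p) :
    ((∃ ρ : Diagram X x₀ → Diagram X x₀ → ℝ≥0∞, IsEPMetric ρ ∧
        (∀ a a' b b' : Diagram X x₀, ρ (a + b) (a' + b') ≤ lpNorm p ![ρ a a', ρ b b']) ∧
        ∀ x y : X, ρ (diagι x₀ x) (diagι x₀ y) = d x y)
      ↔ (∀ x y : X, d x y ≤ lpNorm p ![d x x₀, d x₀ y])) ∧
    ((∀ x y : X, d x y ≤ lpNorm p ![d x x₀, d x₀ y])
      ↔ (∀ x y : X, Wp d x₀ p (diagι x₀ x) (diagι x₀ y) = d x y)) := by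
  have hBC : (∀ x y : X, d x y ≤ lpNorm p ![d x x₀, d x₀ y]) →
      ∀ x y : X, Wp d x₀ p (diagι x₀ x) (diagι x₀ y) = d x y := fun hB x y =>
    le_antisymm (Wp_le_d hd hp x y) (le_Wp fun s t hs ht => dxy_le_WpM hd hp hB hs ht)
  constructor
  · constructor
    · rintro ⟨ρ, hρ, hsub, hpull⟩ x y
      have hι0 : diagι x₀ x₀ = (0 : Diagram X x₀) := by
        rw [show (0 : Diagram X x₀) = (diagCon x₀).mk' 0 from (map_zero _).symm, diagι]
        exact mk'_eq.2 ⟨0, 1, by simp⟩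
      calc d x y = ρ (diagι x₀ x) (diagι x₀ y) := (hpull x y).symm
        _ = ρ (diagι x₀ x + diagι x₀ x₀) (diagι x₀ x₀ + diagι x₀ y) := by
            rw [hι0, add_zero, zero_add]
        _ ≤ lpNorm p ![ρ (diagι x₀ x) (diagι x₀ x₀), ρ (diagι x₀ x₀) (diagι x₀ y)] :=
            hsub _ _ _ _
        _ = lpNorm p ![d x x₀, d x₀ y] := by rw [hpull, hpull]
    · intro hB
      exact ⟨Wp d x₀ p, ⟨Wp_refl hd hp, Wp_symm hd hp, Wp_triangle hd hp⟩,
        Wp_subadd hd hp, hBC hB⟩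
  · constructor
    · exact hBC
    · intro hC x y
      calc d x y = Wp d x₀ p (diagι x₀ x) (diagι x₀ y) := (hC x y).symm
        _ ≤ lpNorm p ![d x x₀, d x₀ y] := Wp_le_pair hd hp x y

end
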